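/- Let k ≥ 2 be an integer and let T be a tree on n ≥ 8 vertices with diameter n − t, where n/3 ≤ t ≤ n − 5. Then (n+2)/3 ≤ α_{k-reg}(T) ≤ max{n − f(n,t) − 1, t + 1}, where f(n,t) = ⌈2(t−1)/(n−t)⌉ + 2 if n − t is even, and f(n,t) = ⌈2(t−1)/(n−t−1)⌉ + 2 if n − t is odd. -/

import Mathlib

open SimpleGraph

/-- The degree of a vertex `v` in `G`: the number of neighbors of `v`. -/
noncomputable def degN {V : Type*} (G : SimpleGraph V) (v : V) : ℕ := {u | G.Adj v u}.ncard

/-- A set of vertices is `k`-independent if the induced subgraph has maximum degree at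
most `k`, i.e. every vertex of the set has at most `k` neighbors inside the set. -/
def IsKIndepSet {V : Type*} (G : SimpleGraph V) (k : ℕ) (S : Set V) : Prop :=
  ∀ v ∈ S, {u | u ∈ S ∧ G.Adj v u}.ncard ≤ k

/-- A set of vertices is regular if all its vertices have the same degree in `G`. -/
def IsRegularSet {V : Type*} (G : SimpleGraph V) (S : Set V) : Prop :=
  ∀ u ∈ S, ∀ v ∈ S, degN G u = degN G v

/-- The regular `k`-independence number `α_{k-reg}(G)`: the maximum cardinality of a set
of vertices that is both `k`-independent and regular. -/
noncomputable def regKIndepNum {V : Type*} (G : SimpleGraph V) (k : ℕ) : ℕ :=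
  sSup {m : ℕ | ∃ S : Set V, S.ncard = m ∧ IsKIndepSet G k S ∧ IsRegularSet G S}

/-- `f(n,t) = ⌈2(t-1)/(n-t)⌉ + 2` if `n - t` is even, and
`f(n,t) = ⌈2(t-1)/(n-t-1)⌉ + 2` if `n - t` is odd. -/
def fnt (n t : ℕ) : ℕ :=
  if (n - t) % 2 = 0 then (2 * (t - 1) + (n - t) - 1) / (n - t) + 2
  else (2 * (t - 1) + (n - t - 1) - 1) / (n - t - 1) + 2

namespace StmtAux

variable {V : Type*} {T : SimpleGraph V}

lemma path_eq (hT : T.IsTree) {a b : V} (q r : T.Walk a b) (hq : q.IsPath) (hr : r.IsPath) :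
    q = r :=
  congrArg Subtype.val (hT.IsAcyclic.path_unique ⟨q, hq⟩ ⟨r, hr⟩)

lemma length_eq_dist (hT : T.IsTree) {a b : V} (q : T.Walk a b) (hq : q.IsPath) :
    q.length = T.dist a b := by
  classical
  obtain ⟨w, hw⟩ := (Reachable.exists_walk_length_eq_dist ⟨q⟩ : ∃ w : T.Walk a b, _)
  have h1 : q = w.bypass := path_eq hT _ _ hq w.bypass_isPath
  have h2 := w.length_bypass_le
  have h3 := dist_le q
  have h4 := dist_le w.bypass
  rw [h1]
  omega

lemma dist_split (hT : T.IsTree) {a b c : V} (q : T.Walk a b) (hq : q.IsPath)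
    (hc : c ∈ q.support) : T.dist a b = T.dist a c + T.dist c b := by
  classical
  have h1 := length_eq_dist hT (q.takeUntil c hc) (hq.takeUntil hc)
  have h2 := length_eq_dist hT (q.dropUntil c hc) (hq.dropUntil hc)
  have h3 := congrArg Walk.length (q.take_spec hc)
  rw [Walk.length_append] at h3
  rw [← length_eq_dist hT q hq, ← h3, h1, h2]

lemma eq_of_dist_eq (hT : T.IsTree) {a b : V} (q : T.Walk a b) (hq : q.IsPath) {c d : V}
    (hc : c ∈ q.support) (hd : d ∈ q.support) (h : T.dist a c = T.dist a d) : c = d := by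
  classical
  have hc1 := length_eq_dist hT (q.takeUntil c hc) (hq.takeUntil hc)
  have hd1 := length_eq_dist hT (q.takeUntil d hd) (hq.takeUntil hd)
  have hgc : ∀ L, L = (q.takeUntil c hc).length → q.getVert L = c := by
    intro L hL
    conv_lhs => rw [← q.take_spec hc]
    rw [Walk.getVert_append, hL]
    simp
  have hgd : ∀ L, L = (q.takeUntil d hd).length → q.getVert L = d := by
    intro L hL
    conv_lhs => rw [← q.take_spec hd]
    rw [Walk.getVert_append, hL]
    simp
  have hgc := hgc _ rfl
  have hgd := hgd _ rfl
  rw [hc1, h] at hgc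
  rw [hd1] at hgd
  exact hgc.symm.trans hgd

lemma dist_pos_of_ne (hT : T.IsTree) {a b : V} (h : a ≠ b) : 0 < T.dist a b := by
  rcases Nat.eq_zero_or_pos (T.dist a b) with h0 | h0
  · exact absurd ((hT.isConnected.dist_eq_zero_iff).mp h0) h
  · exact h0

lemma dist_eq_one_of_adj (hT : T.IsTree) {a b : V} (h : T.Adj a b) : T.dist a b = 1 := by
  have h1 : T.dist a b ≤ 1 := by
    have := dist_le h.toWalk
    simpa using this
  have h2 := dist_pos_of_ne hT h.ne
  omega

end StmtAux

namespace StmtAux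

variable {V : Type*} {T : SimpleGraph V}

lemma mem_takeUntil [DecidableEq V] (hT : T.IsTree) {x u : V} (q : T.Walk x u) (hq : q.IsPath) {z v : V}
    (hz : z ∈ q.support) (hv : v ∈ q.support) (h : T.dist x z ≤ T.dist x v) :
    z ∈ (q.takeUntil v hv).support := by
  classical
  by_contra hzn
  have hz' : z ∈ ((q.takeUntil v hv).append (q.dropUntil v hv)).support := by
    rw [q.take_spec hv]; exact hz
  rw [Walk.mem_support_append_iff] at hz'
  rcases hz' with hz' | hz'
  · exact hzn hz'
  · have hzv : z ≠ v := by
      rintro rfl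
      exact hzn (Walk.end_mem_support _)
    have h1 := dist_split hT q hq hv
    have h2 := dist_split hT q hq hz
    have h3 := dist_split hT (q.dropUntil v hv) (hq.dropUntil hv) hz'
    have h4 := dist_pos_of_ne hT (Ne.symm hzv)
    omega

lemma getVert_one_mem_support {a b : V} (q : T.Walk a b) (h : ¬ q.Nil) :
    q.getVert 1 ∈ q.support := by
  rw [← q.cons_support_tail h]
  exact List.mem_cons_of_mem _ q.tail.start_mem_support

variable [Fintype V] [DecidableRel T.Adj]

lemma deg_pos (hT : T.IsTree) (hcard : 2 ≤ Fintype.card V) (v : V) : 0 < T.degree v := by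
  obtain ⟨u, hu⟩ := Fintype.exists_ne_of_one_lt_card (by omega) v
  obtain ⟨w⟩ := hT.isConnected.preconnected v u
  rw [degree_pos_iff_exists_adj]
  cases w with
  | nil => exact absurd rfl hu
  | cons h _ => exact ⟨_, h⟩

lemma endpoint_leaf (hT : T.IsTree) {d : ℕ}
    (hecc : ∀ a b : V, T.dist a b ≤ d) {x y : V} (p : T.Walk x y) (hp : p.IsPath)
    (hlen : p.length = d) (hd : 1 ≤ d) (hcard : 2 ≤ Fintype.card V) : T.degree x = 1 := by
  have hpos := deg_pos hT hcard x
  have hcle : T.degree x ≤ 1 := by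
    rw [degree, Finset.card_le_one]
    intro z hz z' hz'
    rw [mem_neighborFinset] at hz hz'
    have key : ∀ w, T.Adj x w → w ∈ p.support := by
      intro w hw
      by_contra hwn
      have hq : (Walk.cons hw.symm p).IsPath := by
        rw [Walk.cons_isPath_iff]; exact ⟨hp, hwn⟩
      have h1 := length_eq_dist hT _ hq
      have h2 := hecc w y
      simp only [Walk.length_cons, hlen] at h1
      omega
    exact eq_of_dist_eq hT p hp (key z hz) (key z' hz')
      (by rw [dist_eq_one_of_adj hT hz, dist_eq_one_of_adj hT hz'])
  omega

lemma leaf_on_path {x y v : V} (p : T.Walk x y) (hp : p.IsPath)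
    (hv : v ∈ p.support) (hdeg : T.degree v = 1) : v = x ∨ v = y := by
  classical
  by_contra hc
  push_neg at hc
  obtain ⟨hvx, hvy⟩ := hc
  have hq1 : (p.takeUntil v hv).IsPath := hp.takeUntil hv
  have hq2 : (p.dropUntil v hv).IsPath := hp.dropUntil hv
  set q1 := p.takeUntil v hv with hq1def
  set q2 := p.dropUntil v hv with hq2def
  have hn1 : ¬ q1.reverse.Nil := by
    rw [Walk.nil_iff_length_eq, Walk.length_reverse]
    intro h0
    exact hvx (Walk.eq_of_length_eq_zero h0).symm
  have hn2 : ¬ q2.Nil := by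
    rw [Walk.nil_iff_length_eq]
    intro h0
    exact hvy (Walk.eq_of_length_eq_zero h0)
  set z1 := q1.reverse.getVert 1 with hz1def
  set z2 := q2.getVert 1 with hz2def
  have ha1 : T.Adj v z1 := q1.reverse.adj_snd hn1
  have ha2 : T.Adj v z2 := q2.adj_snd hn2
  have hz1m : z1 ∈ q1.support := by
    have h := getVert_one_mem_support q1.reverse hn1
    rwa [Walk.support_reverse, List.mem_reverse] at h
  have hz2m : z2 ∈ q2.support.tail := by
    have h := getVert_one_mem_support q2 hn2
    rw [q2.support_eq_cons, List.mem_cons] at h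
    rcases h with h | h
    · exact absurd h ha2.ne'
    · assumption
  have hne : z1 ≠ z2 := by
    intro he
    have hnodup : p.support.Nodup := hp.support_nodup
    have hps : p.support = q1.support ++ q2.support.tail := by
      rw [hq1def, hq2def, ← Walk.support_append, p.take_spec hv]
    rw [hps, List.nodup_append] at hnodup
    exact hnodup.2.2 _ hz1m _ hz2m he
  have hsub : ({z1, z2} : Finset V) ⊆ T.neighborFinset v := by
    intro z hz
    rw [Finset.mem_insert, Finset.mem_singleton] at hz
    rcases hz with rfl | rfl <;> rwa [mem_neighborFinset]
  have h2 := Finset.card_le_card hsub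
  rw [Finset.card_pair hne] at h2
  have h3 : (T.neighborFinset v).card = T.degree v := rfl
  omega

end StmtAux

namespace StmtAux

variable {V : Type*} {T : SimpleGraph V} [Fintype V] [DecidableRel T.Adj] [DecidableEq V]

lemma main_struct (hT : T.IsTree) {d : ℕ} {x y : V}
    (hxy : T.dist x y = d) (hecc : ∀ a b : V, T.dist a b ≤ d) (hd5 : 5 ≤ d)
    (hcard : 2 ≤ Fintype.card V) :
    T.degree x = 1 ∧ T.degree y = 1 ∧
    (Finset.univ.filter (fun v => T.degree v = 1)).card + d ≤ Fintype.card V + 1 ∧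
    Fintype.card V ≤ d + 1 +
      ((Finset.univ.filter (fun v => T.degree v = 1)).card - 2) * (d / 2) ∧
    2 ≤ (Finset.univ.filter (fun v => T.degree v = 1)).card := by
  obtain ⟨p0, hp0⟩ := (hT.isConnected.preconnected x y).exists_walk_length_eq_dist
  set p := p0.bypass with hpdef
  have hp : p.IsPath := p0.bypass_isPath
  have hplen : p.length = d := by rw [length_eq_dist hT p hp, hxy]
  have hxl : T.degree x = 1 := endpoint_leaf hT hecc p hp hplen (by omega) hcard
  have hyl : T.degree y = 1 :=
    endpoint_leaf hT hecc p.reverse hp.reverse (by rw [Walk.length_reverse, hplen]) (by omega) hcard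
  have hxyne : x ≠ y := by
    intro h
    rw [h, dist_self] at hxy
    omega
  set ℓf := Finset.univ.filter (fun v => T.degree v = 1) with hℓfdef
  have hxℓ : x ∈ ℓf := by simp [hℓfdef, hxl]
  have hyℓ : y ∈ ℓf := by simp [hℓfdef, hyl]
  have h2ℓ : 2 ≤ ℓf.card := by
    have : ({x, y} : Finset V) ⊆ ℓf := by
      intro z hz
      rw [Finset.mem_insert, Finset.mem_singleton] at hz
      rcases hz with rfl | rfl <;> assumption
    have := Finset.card_le_card this
    rwa [Finset.card_pair hxyne] at this
  set Pset := p.support.toFinset with hPdef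
  have hPcard : Pset.card = d + 1 := by
    rw [hPdef, List.toFinset_card_of_nodup hp.support_nodup, Walk.length_support, hplen]
  have hPle : Pset.card ≤ Fintype.card V := Finset.card_le_card (Finset.subset_univ _)
  -- leaf count upper bound
  have hleafsub : ℓf ⊆ (Finset.univ \ Pset) ∪ {x, y} := by
    intro v hv
    rw [hℓfdef, Finset.mem_filter] at hv
    by_cases hvp : v ∈ p.support
    · rcases leaf_on_path p hp hvp hv.2 with rfl | rfl
      · exact Finset.mem_union_right _ (by simp)
      · exact Finset.mem_union_right _ (by simp)
    · exact Finset.mem_union_left _ (by simp [hPdef, hvp])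
  have hleafcount : ℓf.card + d ≤ Fintype.card V + 1 := by
    have h1 := Finset.card_le_card hleafsub
    have h2 := Finset.card_union_le (Finset.univ \ Pset) ({x, y} : Finset V)
    have h3 : (Finset.univ \ Pset).card = Fintype.card V - Pset.card :=
      Finset.card_sdiff_of_subset (Finset.subset_univ _)
    have h4 : ({x, y} : Finset V).card = 2 := Finset.card_pair hxyne
    omega
  refine ⟨hxl, hyl, hleafcount, ?_, h2ℓ⟩
  -- the injection argument
  have hex : ∀ a b : V, ∃ q : T.Walk a b, q.IsPath :=
    fun a b => ⟨(hT.isConnected.preconnected a b).some.bypass, Walk.bypass_isPath _⟩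
  choose pth hpth using hex
  have puniq : ∀ {a b : V} (q : T.Walk a b), q.IsPath → q = pth a b :=
    fun q hq => path_eq hT q _ hq (hpth _ _)
  have key : ∀ v : V, ∃ u : V, v ∉ p.support →
      ((T.degree u = 1 ∧ u ≠ x ∧ u ≠ y) ∧ v ∈ (pth x u).support ∧ T.dist v u < d / 2) := by
    intro v
    by_cases hvp : v ∈ p.support
    · exact ⟨x, fun h => absurd hvp h⟩
    · set qxv := pth x v with hqxvdef
      have hxs : x ∈ Pset := by simp [hPdef, Walk.start_mem_support]
      have hBne : (Pset.filter (fun z => z ∈ qxv.support)).Nonempty :=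
        ⟨x, Finset.mem_filter.mpr ⟨hxs, Walk.start_mem_support _⟩⟩
      obtain ⟨w, hwB, hwmin⟩ := Finset.exists_min_image _ (fun z => T.dist v z) hBne
      have hwP : w ∈ p.support := by
        have := (Finset.mem_filter.mp hwB).1
        rwa [hPdef, List.mem_toFinset] at this
      have hwq : w ∈ qxv.support := (Finset.mem_filter.mp hwB).2
      have hvS : v ∈ (pth x v).support := Walk.end_mem_support _
      obtain ⟨u, huS, humax⟩ := Finset.exists_max_image
        (Finset.univ.filter (fun u => v ∈ (pth x u).support)) (fun u => T.dist x u)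
        ⟨v, Finset.mem_filter.mpr ⟨Finset.mem_univ _, hvS⟩⟩
      have hvqxu : v ∈ (pth x u).support := (Finset.mem_filter.mp huS).2
      set qxu := pth x u with hqxudef
      have hux : u ≠ x := by
        intro heqq
        have h0 : (pth x u).length = 0 := by
          rw [length_eq_dist hT _ (hpth x u), heqq, SimpleGraph.dist_self]
        have hnil : (pth x u).Nil := Walk.nil_iff_length_eq.mpr h0
        rw [Walk.nil_iff_support_eq] at hnil
        rw [hqxudef, hnil] at hvqxu
        simp at hvqxu
        exact hvp (by rw [hvqxu]; exact Walk.start_mem_support p)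
      have huy : u ≠ y := by
        intro heqq
        rw [hqxudef] at hvqxu
        rw [heqq] at hvqxu
        rw [← puniq p hp] at hvqxu
        exact hvp hvqxu
      have htk : qxu.takeUntil v hvqxu = qxv := puniq _ ((hpth x u).takeUntil hvqxu)
      have hwqxu : w ∈ qxu.support := by
        have h : w ∈ (qxu.takeUntil v hvqxu).support := by rw [htk]; exact hwq
        exact Walk.support_takeUntil_subset _ _ h
      have hvd : v ∈ (qxu.dropUntil w hwqxu).support := by
        have hsplit : v ∈ ((qxu.takeUntil w hwqxu).append (qxu.dropUntil w hwqxu)).support := by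
          rw [qxu.take_spec hwqxu]; exact hvqxu
        rw [Walk.mem_support_append_iff] at hsplit
        rcases hsplit with h | h
        · exfalso
          have e1 := puniq (qxu.takeUntil w hwqxu) ((hpth x u).takeUntil hwqxu)
          have e2 := puniq (p.takeUntil w hwP) (hp.takeUntil hwP)
          rw [e1, ← e2] at h
          exact hvp (Walk.support_takeUntil_subset _ _ h)
        · exact h
      have hZ' : ∀ z, z ∈ (qxu.dropUntil w hwqxu).support → z ∈ p.support → z = w := by
        intro z hzd hzP
        have hzq : z ∈ qxu.support := Walk.support_dropUntil_subset _ _ hzd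
        by_cases hcmp : T.dist x z ≤ T.dist x v
        · have hzq2 : z ∈ qxv.support := by
            have h := mem_takeUntil hT qxu (hpth x u) hzq hvqxu hcmp
            rwa [htk] at h
          have hmin := hwmin z (Finset.mem_filter.mpr
            ⟨by rw [hPdef, List.mem_toFinset]; exact hzP, hzq2⟩)
          have e1 := dist_split hT qxu (hpth x u) hzq
          have e2 := dist_split hT qxu (hpth x u) hwqxu
          have e3 := dist_split hT (qxu.dropUntil w hwqxu) ((hpth x u).dropUntil hwqxu) hzd
          have e4 := dist_split hT qxv (hpth x v) hzq2
          have e5 := dist_split hT qxv (hpth x v) hwq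
          by_contra hzw
          have e6 := dist_pos_of_ne hT (show w ≠ z from fun e => hzw e.symm)
          have c1 : T.dist v z = T.dist z v := T.dist_comm
          have c2 : T.dist v w = T.dist w v := T.dist_comm
          omega
        · push_neg at hcmp
          have hvtk : v ∈ (qxu.takeUntil z hzq).support :=
            mem_takeUntil hT qxu (hpth x u) hvqxu hzq (le_of_lt hcmp)
          have e1 := puniq (qxu.takeUntil z hzq) ((hpth x u).takeUntil hzq)
          have e2 := puniq (p.takeUntil z hzP) (hp.takeUntil hzP)
          rw [e1, ← e2] at hvtk
          exact absurd (Walk.support_takeUntil_subset _ _ hvtk) hvp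
      have hul : T.degree u = 1 := by
        have hpos := deg_pos hT hcard u
        have hle : T.degree u ≤ 1 := by
          rw [degree, Finset.card_le_one]
          intro z hz z' hz'
          rw [mem_neighborFinset] at hz hz'
          have key2 : ∀ z, T.Adj u z → z ∈ qxu.support := by
            intro z hzadj
            by_contra hzn
            have hcons : (Walk.cons hzadj.symm qxu.reverse).IsPath := by
              rw [Walk.cons_isPath_iff]
              refine ⟨(hpth x u).reverse, ?_⟩
              rwa [Walk.support_reverse, List.mem_reverse]
            have hrev : (Walk.cons hzadj.symm qxu.reverse).reverse.IsPath := hcons.reverse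
            have heq := puniq _ hrev
            have hvmem : v ∈ (Walk.cons hzadj.symm qxu.reverse).reverse.support := by
              rw [Walk.support_reverse, List.mem_reverse, Walk.support_cons]
              exact List.mem_cons_of_mem _
                (by rw [Walk.support_reverse, List.mem_reverse]; exact hvqxu)
            rw [heq] at hvmem
            have hmax := humax z (Finset.mem_filter.mpr ⟨Finset.mem_univ _, hvmem⟩)
            have hlen2 := length_eq_dist hT _ hrev
            have hlen3 : (Walk.cons hzadj.symm qxu.reverse).reverse.length = qxu.length + 1 := by
              rw [Walk.length_reverse, Walk.length_cons, Walk.length_reverse]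
            have hqlen := length_eq_dist hT qxu (hpth x u)
            rw [heq] at hlen2 hlen3
            omega
          have hz1 := key2 z hz
          have hz2 := key2 z' hz'
          have d1 := dist_split hT qxu (hpth x u) hz1
          have d2 := dist_split hT qxu (hpth x u) hz2
          have a1 : T.dist z u = 1 := dist_eq_one_of_adj hT hz.symm
          have a2 : T.dist z' u = 1 := dist_eq_one_of_adj hT hz'.symm
          exact eq_of_dist_eq hT qxu (hpth x u) hz1 hz2 (by omega)
        omega
      have f1 := dist_split hT p hp hwP
      have f2 := dist_split hT qxu (hpth x u) hvqxu
      have f3 := dist_split hT qxv (hpth x v) hwq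
      set s := ((p.dropUntil w hwP).reverse.append (qxu.dropUntil w hwqxu)) with hsdef
      have hs : s.IsPath := by
        rw [Walk.isPath_def, Walk.support_append, List.nodup_append]
        refine ⟨(hp.dropUntil hwP).reverse.support_nodup,
          (((hpth x u).dropUntil hwqxu).support_nodup).sublist (List.tail_sublist _), ?_⟩
        intro z hz1 z' hz2 hzz'
        subst hzz'
        have hz1' : z ∈ (p.dropUntil w hwP).support := by
          rwa [Walk.support_reverse, List.mem_reverse] at hz1
        have hz2' : z ∈ (qxu.dropUntil w hwqxu).support := List.mem_of_mem_tail hz2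
        have hzw : z = w := hZ' z hz2' (Walk.support_dropUntil_subset _ _ hz1')
        have hnd := ((hpth x u).dropUntil hwqxu).support_nodup
        rw [(qxu.dropUntil w hwqxu).support_eq_cons] at hnd
        rw [hzw] at hz2
        exact (List.nodup_cons.mp hnd).1 hz2
      have hslen := length_eq_dist hT s hs
      have hslen2 : s.length = T.dist w y + T.dist w u := by
        rw [hsdef, Walk.length_append, Walk.length_reverse,
          length_eq_dist hT _ (hp.dropUntil hwP),
          length_eq_dist hT _ ((hpth x u).dropUntil hwqxu)]
      have f4 := dist_split hT (qxu.dropUntil w hwqxu) ((hpth x u).dropUntil hwqxu) hvd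
      have hwvne : w ≠ v := fun e => hvp (e ▸ hwP)
      have f5 := dist_pos_of_ne hT hwvne
      have g1 := hecc x u
      have g2 := hecc y u
      have c2 : T.dist v w = T.dist w v := T.dist_comm
      have c3 : T.dist y u = T.dist w y + T.dist w u := by rw [← hslen2, hslen]
      refine ⟨u, fun _ => ⟨⟨hul, hux, huy⟩, hvqxu, ?_⟩⟩
      omega
  choose uf hu using key
  have hinj : ∀ v ∈ Finset.univ \ Pset, ∀ v' ∈ Finset.univ \ Pset,
      (fun v => (uf v, T.dist v (uf v))) v = (fun v => (uf v, T.dist v (uf v))) v' → v = v' := by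
    intro v hv v' hv' heq
    rw [Finset.mem_sdiff, hPdef] at hv hv'
    have hv1 : v ∉ p.support := by
      intro h; exact hv.2 (List.mem_toFinset.mpr h)
    have hv2 : v' ∉ p.support := by
      intro h; exact hv'.2 (List.mem_toFinset.mpr h)
    obtain ⟨_, hm1, _⟩ := hu v hv1
    obtain ⟨_, hm2, _⟩ := hu v' hv2
    simp only [Prod.mk.injEq] at heq
    obtain ⟨heq1, heq2⟩ := heq
    rw [heq1] at hm1
    have d1 := dist_split hT (pth x (uf v')) (hpth x (uf v')) hm1
    have d2 := dist_split hT (pth x (uf v')) (hpth x (uf v')) hm2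
    have c1 : T.dist v (uf v) = T.dist v (uf v') := by rw [heq1]
    have c4 : T.dist v (uf v') = T.dist (uf v') v := T.dist_comm
    have c5 : T.dist v' (uf v') = T.dist (uf v') v' := T.dist_comm
    refine eq_of_dist_eq hT (pth x (uf v')) (hpth x (uf v')) hm1 hm2 ?_
    have := heq2
    omega
  have hmaps : ∀ v ∈ Finset.univ \ Pset,
      (fun v => (uf v, T.dist v (uf v))) v ∈ ((ℓf.erase x).erase y) ×ˢ Finset.range (d / 2) := by
    intro v hv
    rw [Finset.mem_sdiff, hPdef] at hv
    have hv1 : v ∉ p.support := by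
      intro h; exact hv.2 (List.mem_toFinset.mpr h)
    obtain ⟨⟨hl, hnx, hny⟩, _, hlt⟩ := hu v hv1
    rw [Finset.mem_product]
    constructor
    · rw [Finset.mem_erase, Finset.mem_erase]
      exact ⟨hny, hnx, by simp [hℓfdef, hl]⟩
    · rw [Finset.mem_range]
      exact hlt
  have hcard2 := Finset.card_le_card_of_injOn _ hmaps hinj
  have hA : (Finset.univ \ Pset).card = Fintype.card V - Pset.card :=
    Finset.card_sdiff_of_subset (Finset.subset_univ _)
  have htgt : (((ℓf.erase x).erase y) ×ˢ Finset.range (d / 2)).card = (ℓf.card - 2) * (d / 2) := by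
    rw [Finset.card_product, Finset.card_range, Finset.card_erase_of_mem
      (Finset.mem_erase.mpr ⟨hxyne.symm, hyℓ⟩), Finset.card_erase_of_mem hxℓ]
    all_goals (congr 1 <;> omega)
  rw [htgt, hA, hPcard] at hcard2
  omega

end StmtAux

namespace StmtAux

variable {V : Type*} {T : SimpleGraph V} [Fintype V] [DecidableRel T.Adj] [DecidableEq V]

lemma degree_partition (hT : T.IsTree) (hcard : 2 ≤ Fintype.card V) :
    (Finset.univ.filter (fun v => T.degree v = 1)).card
      + (Finset.univ.filter (fun v => T.degree v = 2)).card
      + (Finset.univ.filter (fun v => 3 ≤ T.degree v)).card = Fintype.card V ∧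
    (Finset.univ.filter (fun v => 3 ≤ T.degree v)).card + 2
      ≤ (Finset.univ.filter (fun v => T.degree v = 1)).card ∧
    ((3:ℕ) ≤ (Finset.univ.filter (fun v => T.degree v = 1)).card →
      1 ≤ (Finset.univ.filter (fun v => 3 ≤ T.degree v)).card) := by
  set A := Finset.univ.filter (fun v => T.degree v = 1) with hA
  set B := Finset.univ.filter (fun v => T.degree v = 2) with hB
  set C := Finset.univ.filter (fun v => 3 ≤ T.degree v) with hC
  have hdp : ∀ v : V, 1 ≤ T.degree v := fun v => deg_pos hT hcard v
  -- partition of card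
  have h1 := Finset.card_filter_add_card_filter_not
    (s := Finset.univ) (p := fun v => T.degree v = 1)
  have h2 := Finset.card_filter_add_card_filter_not
    (s := Finset.univ.filter (fun v => ¬ T.degree v = 1)) (p := fun v => T.degree v = 2)
  have e1 : (Finset.univ.filter (fun v => ¬ T.degree v = 1)).filter (fun v => T.degree v = 2)
      = B := by
    rw [Finset.filter_filter, hB]
    apply Finset.filter_congr
    intro v _
    constructor
    · intro h; exact h.2
    · intro h; exact ⟨by omega, h⟩
  have e2 : (Finset.univ.filter (fun v => ¬ T.degree v = 1)).filter (fun v => ¬ T.degree v = 2)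
      = C := by
    rw [Finset.filter_filter, hC]
    apply Finset.filter_congr
    intro v _
    have := hdp v
    constructor
    · intro h; omega
    · intro h; omega
  rw [e1, e2] at h2
  rw [← hA] at h1
  have hpart : A.card + B.card + C.card = Fintype.card V := by
    rw [Finset.card_univ] at h1
    omega
  -- degree sum
  have hsum : ∑ v, T.degree v = 2 * (Fintype.card V - 1) := by
    rw [T.sum_degrees_eq_twice_card_edges]
    have hE := hT.card_edgeFinset
    omega
  have s1 := Finset.sum_filter_add_sum_filter_not Finset.univ
    (fun v => T.degree v = 1) (fun v => T.degree v)
  have s2 := Finset.sum_filter_add_sum_filter_not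
    (Finset.univ.filter (fun v => ¬ T.degree v = 1)) (fun v => T.degree v = 2)
    (fun v => T.degree v)
  rw [e1, e2] at s2
  rw [← hA] at s1
  have sA : ∑ v ∈ A, T.degree v = A.card := by
    rw [Finset.sum_congr rfl (fun v hv => (Finset.mem_filter.mp hv).2)]
    simp; rfl
  have sB : ∑ v ∈ B, T.degree v = 2 * B.card := by
    rw [Finset.sum_congr rfl (fun v hv => (Finset.mem_filter.mp hv).2)]
    simp [mul_comm]; rfl
  have sC : 3 * C.card ≤ ∑ v ∈ C, T.degree v := by
    have := Finset.card_nsmul_le_sum C (fun v => T.degree v) 3 (fun v hv => (Finset.mem_filter.mp hv).2)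
    simpa [mul_comm] using this
  have hAC : C.card + 2 ≤ A.card := by omega
  refine ⟨hpart, hAC, ?_⟩
  intro h3
  by_contra hC1
  push_neg at hC1
  have hCe : C = ∅ := Finset.card_eq_zero.mp (by omega)
  have sC0 : ∑ v ∈ C, T.degree v = 0 := by rw [hCe]; simp
  omega

lemma fnt_arith (n t ℓ : ℕ) (hd5 : 5 ≤ n - t) (ht : 3 ≤ t) (hℓ2 : 2 ≤ ℓ)
    (h : t - 1 ≤ (ℓ - 2) * ((n - t) / 2)) :
    ((if (n - t) % 2 = 0 then (2 * (t - 1) + (n - t) - 1) / (n - t) + 2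
      else (2 * (t - 1) + (n - t - 1) - 1) / (n - t - 1) + 2) ≤ ℓ) ∧
    3 ≤ (if (n - t) % 2 = 0 then (2 * (t - 1) + (n - t) - 1) / (n - t) + 2
      else (2 * (t - 1) + (n - t - 1) - 1) / (n - t - 1) + 2) := by
  set d := n - t with hd
  by_cases hpar : d % 2 = 0
  · rw [if_pos hpar]
    have hdpos : 0 < d := by omega
    have h2 : 2 * (t - 1) ≤ (ℓ - 2) * d := by
      calc 2 * (t - 1) ≤ 2 * ((ℓ - 2) * (d / 2)) := by omega
        _ = (ℓ - 2) * (2 * (d / 2)) := by ring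
        _ ≤ (ℓ - 2) * d := Nat.mul_le_mul_left _ (by omega)
    constructor
    · have hlt : (2 * (t - 1) + d - 1) / d < ℓ - 1 := by
        rw [Nat.div_lt_iff_lt_mul hdpos]
        have he : ℓ - 1 = (ℓ - 2) + 1 := by omega
        rw [he, add_mul, one_mul]
        omega
      omega
    · have h1 : 1 ≤ (2 * (t - 1) + d - 1) / d := by
        rw [Nat.one_le_div_iff hdpos]
        omega
      omega
  · rw [if_neg hpar]
    have hdpos : 0 < d - 1 := by omega
    have hdd : 2 * (d / 2) = d - 1 := by omega
    have h2 : 2 * (t - 1) ≤ (ℓ - 2) * (d - 1) := by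
      calc 2 * (t - 1) ≤ 2 * ((ℓ - 2) * (d / 2)) := by omega
        _ = (ℓ - 2) * (2 * (d / 2)) := by ring
        _ = (ℓ - 2) * (d - 1) := by rw [hdd]
    constructor
    · have hlt : (2 * (t - 1) + (d - 1) - 1) / (d - 1) < ℓ - 1 := by
        rw [Nat.div_lt_iff_lt_mul hdpos]
        have he : ℓ - 1 = (ℓ - 2) + 1 := by omega
        rw [he, add_mul, one_mul]
        omega
      omega
    · have h1 : 1 ≤ (2 * (t - 1) + (d - 1) - 1) / (d - 1) := by
        rw [Nat.one_le_div_iff hdpos]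
        omega
      omega

end StmtAux


namespace StmtAux

variable {V : Type*} {T : SimpleGraph V} [Fintype V] [DecidableRel T.Adj]

lemma degN_eq (v : V) : degN T v = T.degree v := by
  show ({u | T.Adj v u}).ncard = (T.neighborFinset v).card
  rw [neighborFinset_def, ← Set.ncard_eq_toFinset_card']
  rfl

lemma le_regKIndepNum {k : ℕ} (S : Set V) (h1 : IsKIndepSet T k S) (h2 : IsRegularSet T S) :
    S.ncard ≤ regKIndepNum T k := by
  apply le_csSup
  · refine ⟨Fintype.card V, ?_⟩
    rintro m ⟨S', rfl, -, -⟩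
    calc S'.ncard ≤ (Set.univ : Set V).ncard :=
          Set.ncard_le_ncard (Set.subset_univ _) Set.finite_univ
      _ = Fintype.card V := by rw [Set.ncard_univ, Nat.card_eq_fintype_card]
  · exact ⟨S, rfl, h1, h2⟩

lemma regKIndepNum_le {k B : ℕ}
    (h : ∀ S : Set V, IsKIndepSet T k S → IsRegularSet T S → S.ncard ≤ B) :
    regKIndepNum T k ≤ B := by
  apply csSup_le
  · exact ⟨0, ∅, by simp, fun v hv => absurd hv (Set.notMem_empty v),
      fun u hu => absurd hu (Set.notMem_empty u)⟩
  · rintro m ⟨S, rfl, h1, h2⟩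
    exact h S h1 h2

end StmtAux

open StmtAux

/-- For `k ≥ 2` and a tree `T` on `n ≥ 8` vertices with diameter `n - t`, where
`n/3 ≤ t ≤ n - 5`, we have `(n+2)/3 ≤ α_{k-reg}(T) ≤ max {n - f(n,t) - 1, t + 1}`. -/
theorem stmt_11 {V : Type*} [Fintype V] (T : SimpleGraph V) (hT : T.IsTree)
    (n t k : ℕ) (hk : 2 ≤ k) (hn : Fintype.card V = n) (hn8 : 8 ≤ n)
    (ht2 : n ≤ 3 * t) (ht3 : t ≤ n - 5) (hdiam : T.diam = n - t) :
    n + 2 ≤ 3 * regKIndepNum T k ∧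
    regKIndepNum T k ≤ max (n - fnt n t - 1) (t + 1) := by
  classical
  have hcard : 2 ≤ Fintype.card V := by omega
  have hd5 : 5 ≤ n - t := by omega
  have ht3' : 3 ≤ t := by omega
  have htn : t ≤ n := by omega
  have hne : Nonempty V := Fintype.card_pos_iff.mp (by omega)
  obtain ⟨x, y, hxy⟩ := T.exists_dist_eq_diam
  rw [hdiam] at hxy
  have hecc : ∀ a b : V, T.dist a b ≤ n - t := by
    intro a b
    have hnt : T.ediam ≠ ⊤ := ediam_ne_top_of_diam_ne_zero (by rw [hdiam]; omega)
    have := dist_le_diam (G := T) hnt (u := a) (v := b)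
    rwa [hdiam] at this
  obtain ⟨hxl, hyl, hcount, hinj, h2ℓ⟩ := main_struct hT hxy hecc hd5 hcard
  obtain ⟨hpart, hAC, himp⟩ := degree_partition hT hcard
  set A := Finset.univ.filter (fun v => T.degree v = 1) with hA
  set Bf := Finset.univ.filter (fun v => T.degree v = 2) with hB
  set C := Finset.univ.filter (fun v => 3 ≤ T.degree v) with hC
  have harith : t - 1 ≤ (A.card - 2) * ((n - t) / 2) := by
    have h2 : (n - t) / 2 ≤ n - t := Nat.div_le_self _ _
    omega
  have hfnt := fnt_arith n t A.card hd5 ht3' h2ℓ harith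
  rw [show ((if (n - t) % 2 = 0 then (2 * (t - 1) + (n - t) - 1) / (n - t) + 2
      else (2 * (t - 1) + (n - t - 1) - 1) / (n - t - 1) + 2)) = fnt n t from rfl] at hfnt
  obtain ⟨hfle, hf3⟩ := hfnt
  have hC1 : 1 ≤ C.card := himp (by omega)
  have hAt : A.card ≤ t + 1 := by omega
  -- lower bound
  have hlowA : A.card ≤ regKIndepNum T k := by
    have h := le_regKIndepNum (T := T) (k := k) (↑A : Set V) ?_ ?_
    · rwa [Set.ncard_coe_finset] at h
    · intro v hv
      have hv1 : T.degree v = 1 := by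
        rw [Finset.mem_coe, hA, Finset.mem_filter] at hv
        exact hv.2
      calc ({u | u ∈ (↑A : Set V) ∧ T.Adj v u}).ncard ≤ ({u | T.Adj v u}).ncard :=
            Set.ncard_le_ncard (fun u hu => hu.2) (Set.toFinite _)
        _ = T.degree v := degN_eq v
        _ ≤ k := by omega
    · intro u hu v hv
      rw [Finset.mem_coe, hA, Finset.mem_filter] at hu hv
      rw [degN_eq, degN_eq, hu.2, hv.2]
  have hlowB : Bf.card ≤ regKIndepNum T k := by
    have h := le_regKIndepNum (T := T) (k := k) (↑Bf : Set V) ?_ ?_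
    · rwa [Set.ncard_coe_finset] at h
    · intro v hv
      have hv1 : T.degree v = 2 := by
        rw [Finset.mem_coe, hB, Finset.mem_filter] at hv
        exact hv.2
      calc ({u | u ∈ (↑Bf : Set V) ∧ T.Adj v u}).ncard ≤ ({u | T.Adj v u}).ncard :=
            Set.ncard_le_ncard (fun u hu => hu.2) (Set.toFinite _)
        _ = T.degree v := degN_eq v
        _ ≤ k := by omega
    · intro u hu v hv
      rw [Finset.mem_coe, hB, Finset.mem_filter] at hu hv
      rw [degN_eq, degN_eq, hu.2, hv.2]
  constructor
  · omega
  · apply regKIndepNum_le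
    intro S h1 h2
    rcases S.eq_empty_or_nonempty with rfl | ⟨v0, hv0⟩
    · simp
    · have hregS : ∀ v ∈ S, T.degree v = T.degree v0 := by
        intro v hv
        have := h2 v hv v0 hv0
        rwa [degN_eq, degN_eq] at this
      have hd1 : 1 ≤ T.degree v0 := deg_pos hT hcard v0
      by_cases hj1 : T.degree v0 = 1
      · have hsub : S ⊆ (↑A : Set V) := by
          intro v hv
          rw [Finset.mem_coe, hA, Finset.mem_filter]
          exact ⟨Finset.mem_univ _, by rw [hregS v hv, hj1]⟩
        have := (Set.ncard_le_ncard hsub (Set.toFinite _)).trans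
          (le_of_eq (Set.ncard_coe_finset A))
        exact le_trans (by omega) (le_max_right _ _)
      · by_cases hj2 : T.degree v0 = 2
        · have hsub : S ⊆ (↑Bf : Set V) := by
            intro v hv
            rw [Finset.mem_coe, hB, Finset.mem_filter]
            exact ⟨Finset.mem_univ _, by rw [hregS v hv, hj2]⟩
          have := (Set.ncard_le_ncard hsub (Set.toFinite _)).trans
            (le_of_eq (Set.ncard_coe_finset Bf))
          exact le_trans (by omega) (le_max_left _ _)
        · have hsub : S ⊆ (↑C : Set V) := by
            intro v hv
            rw [Finset.mem_coe, hC, Finset.mem_filter]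
            refine ⟨Finset.mem_univ _, ?_⟩
            have := hregS v hv
            have hd2 := deg_pos hT hcard v
            omega
          have := (Set.ncard_le_ncard hsub (Set.toFinite _)).trans
            (le_of_eq (Set.ncard_coe_finset C))
          exact le_trans (by omega) (le_max_right _ _)
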